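/- Let (X, dist) be a metric space, let (K_i) be a sequence of nonempty compact connected subsets of X, and let K ⊆ X be a nonempty compact set such that the Hausdorff distance between K_i and K tends to 0 as i → ∞. Then K is connected. -/
import Mathlib


open Filter Metric

/-- Topological core of Lemma 3.2: if nonempty compact connected sets `K i` converge
to a nonempty compact set `K` in Hausdorff distance, then `K` is connected. -/
theorem stmt_4 {X : Type*} [MetricSpace X]
    (K : ℕ → Set X) (hKcpt : ∀ i, IsCompact (K i)) (hKconn : ∀ i, IsConnected (K i))
    (S : Set X) (hScpt : IsCompact S) (hSne : S.Nonempty)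
    (hconv : Tendsto (fun i => Metric.hausdorffDist (K i) S) atTop (nhds 0)) :
    IsConnected S := by
  refine ⟨hSne, ?_⟩
  rw [isPreconnected_iff_subset_of_fully_disjoint_closed hScpt.isClosed]
  intro u v hu hv hSuv huv
  by_contra hcon
  push_neg at hcon
  obtain ⟨hnu, hnv⟩ := hcon
  set A := S ∩ u with hA
  set B := S ∩ v with hB
  have hAne : A.Nonempty := by
    obtain ⟨x, hxS, hxv⟩ := Set.not_subset.1 hnv
    exact ⟨x, hxS, (hSuv hxS).resolve_right hxv⟩
  have hBne : B.Nonempty := by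
    obtain ⟨x, hxS, hxu⟩ := Set.not_subset.1 hnu
    exact ⟨x, hxS, (hSuv hxS).resolve_left hxu⟩
  have hAcpt : IsCompact A := hScpt.inter_right hu
  have hBcpt : IsCompact B := hScpt.inter_right hv
  have hABdis : Disjoint A B := huv.mono Set.inter_subset_right Set.inter_subset_right
  obtain ⟨δ, hδ, hdis⟩ := hABdis.exists_thickenings hAcpt hBcpt.isClosed
  obtain ⟨i, hi⟩ := (hconv.eventually (gt_mem_nhds hδ)).exists
  have hKne : (K i).Nonempty := (hKconn i).nonempty
  have hfin : EMetric.hausdorffEdist (K i) S ≠ ⊤ :=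
    hausdorffEdist_ne_top_of_nonempty_of_bounded hKne hSne
      (hKcpt i).isBounded hScpt.isBounded
  have hsub : K i ⊆ thickening δ A ∪ thickening δ B := by
    intro x hx
    obtain ⟨y, hyS, hxy⟩ := exists_dist_lt_of_hausdorffDist_lt hx hi hfin
    rcases hSuv hyS with h | h
    · exact Or.inl (mem_thickening_iff.2 ⟨y, ⟨hyS, h⟩, hxy⟩)
    · exact Or.inr (mem_thickening_iff.2 ⟨y, ⟨hyS, h⟩, hxy⟩)
  obtain ⟨a, haA⟩ := hAne
  obtain ⟨b, hbB⟩ := hBne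
  obtain ⟨x, hxK, hxa⟩ := exists_dist_lt_of_hausdorffDist_lt' haA.1 hi hfin
  obtain ⟨y, hyK, hyb⟩ := exists_dist_lt_of_hausdorffDist_lt' hbB.1 hi hfin
  obtain ⟨z, hz⟩ := (hKconn i).isPreconnected (thickening δ A) (thickening δ B)
    isOpen_thickening isOpen_thickening hsub
    ⟨x, hxK, mem_thickening_iff.2 ⟨a, haA, hxa⟩⟩
    ⟨y, hyK, mem_thickening_iff.2 ⟨b, hbB, hyb⟩⟩
  exact (hdis.ne_of_mem hz.2.1 hz.2.2 rfl)
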